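/- arXiv:2502.00959 — 2 statements merged into one kernel-verified Lean document; each statement's English description precedes it below -/
import Mathlib

section
/- Let T be the diagonal maximal torus of U(2) with normalizer N, and Z the center of U(2). If two subgroups S, S' of T are conjugate in U(2) by an element g ∉ N, then S and S' are both contained in Z and S = S'. Consequently, if S ⊆ T is not contained in Z, then N_{U(2)}(S) = N_N(S). -/
open Matrix

abbrev U2 : Type := Matrix.unitaryGroup (Fin 2) ℂ

/-- The diagonal maximal torus `T ≤ U(2)`. -/
def Tsub : Subgroup U2 where
  carrier := {g | ∀ i j : Fin 2, i ≠ j → (g : Matrix (Fin 2) (Fin 2) ℂ) i j = 0}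
  one_mem' := by
    intro i j hij
    simp [Matrix.one_apply, hij]
  mul_mem' := by
    intro a b ha hb i j hij
    show (a.1 * b.1) i j = 0
    rw [Matrix.mul_apply]
    apply Finset.sum_eq_zero
    intro k _
    by_cases hk : k = i
    · subst hk
      rw [hb k j hij, mul_zero]
    · rw [ha i k (fun h => hk h.symm), zero_mul]
  inv_mem' := by
    intro a ha i j hij
    show (star a.1) i j = 0
    rw [Matrix.star_apply]
    rw [ha j i (Ne.symm hij)]
    simp

/-- The determinant-one subgroup `SU(2) ≤ U(2)`. -/
def SUsub : Subgroup U2 where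
  carrier := {g | (g : Matrix (Fin 2) (Fin 2) ℂ).det = 1}
  one_mem' := by simp
  mul_mem' := by
    intro a b ha hb
    simp only [Set.mem_setOf_eq] at *
    rw [Matrix.UnitaryGroup.mul_val, Matrix.det_mul, ha, hb, one_mul]
  inv_mem' := by
    intro a ha
    simp only [Set.mem_setOf_eq] at *
    rw [Matrix.UnitaryGroup.inv_val]
    rw [Matrix.star_eq_conjTranspose, Matrix.det_conjTranspose, ha]
    simp

lemma mem_Tsub_iff (g : U2) : g ∈ Tsub ↔ g.1 0 1 = 0 ∧ g.1 1 0 = 0 := by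
  constructor
  · intro h; exact ⟨h 0 1 (by decide), h 1 0 (by decide)⟩
  · rintro ⟨h1, h2⟩ i j hij
    fin_cases i <;> fin_cases j <;> simp_all

lemma det_ne_zero (g : U2) : g.1 0 0 * g.1 1 1 - g.1 0 1 * g.1 1 0 ≠ 0 := by
  have h : g.1 * star g.1 = 1 := g.2.2
  have hd : g.1.det * (star g.1).det = 1 := by rw [← Matrix.det_mul, h, Matrix.det_one]
  have := left_ne_zero_of_mul_eq_one hd
  rwa [Matrix.det_fin_two] at this

lemma anti_conj (a d b : Matrix (Fin 2) (Fin 2) ℂ)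
    (ha0 : a 0 0 = 0) (ha1 : a 1 1 = 0) (hd0 : d 0 1 = 0) (hd1 : d 1 0 = 0)
    (hb0 : b 0 0 = 0) (hb1 : b 1 1 = 0) :
    (a * d * b) 0 1 = 0 ∧ (a * d * b) 1 0 = 0 := by
  constructor <;> simp [Matrix.mul_apply, Fin.sum_univ_two, ha0, ha1, hd0, hd1, hb0, hb1]

lemma central_of_diag_eq (s : U2) (hs : s ∈ Tsub) (h : s.1 0 0 = s.1 1 1) :
    s ∈ Subgroup.center U2 := by
  rw [mem_Tsub_iff] at hs
  rw [Subgroup.mem_center_iff]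
  intro g
  apply Subtype.ext
  show g.1 * s.1 = s.1 * g.1
  ext i j
  rw [Matrix.mul_apply, Matrix.mul_apply, Fin.sum_univ_two]
  fin_cases i <;> fin_cases j <;>
    simp [hs.1, hs.2, h] <;> ring

lemma key_lemma (g s : U2) (hs : s ∈ Tsub) (hne : s.1 0 0 ≠ s.1 1 1)
    (ht : g * s * g⁻¹ ∈ Tsub) : g ∈ Subgroup.normalizer (Tsub : Set U2) := by
  rw [mem_Tsub_iff] at hs ht
  have hgrp : (g * s * g⁻¹) * g = g * s := by group
  have hm : (g * s * g⁻¹ : U2).1 * g.1 = g.1 * s.1 := by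
    rw [← Matrix.UnitaryGroup.mul_val, ← Matrix.UnitaryGroup.mul_val, hgrp]
  set t : Matrix (Fin 2) (Fin 2) ℂ := (g * s * g⁻¹ : U2).1 with htdef
  have hIJ : ∀ i j : Fin 2,
      t i 0 * g.1 0 j + t i 1 * g.1 1 j = g.1 i 0 * s.1 0 j + g.1 i 1 * s.1 1 j := by
    intro i j
    have := congrFun (congrFun hm i) j
    rwa [Matrix.mul_apply, Matrix.mul_apply, Fin.sum_univ_two, Fin.sum_univ_two] at this
  have E00 : t 0 0 * g.1 0 0 = g.1 0 0 * s.1 0 0 := by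
    linear_combination hIJ 0 0 - g.1 1 0 * ht.1 + g.1 0 1 * hs.2
  have E01 : t 0 0 * g.1 0 1 = g.1 0 1 * s.1 1 1 := by
    linear_combination hIJ 0 1 - g.1 1 1 * ht.1 + g.1 0 0 * hs.1
  have E10 : t 1 1 * g.1 1 0 = g.1 1 0 * s.1 0 0 := by
    linear_combination hIJ 1 0 - g.1 0 0 * ht.2 + g.1 1 1 * hs.2
  have E11 : t 1 1 * g.1 1 1 = g.1 1 1 * s.1 1 1 := by
    linear_combination hIJ 1 1 - g.1 0 1 * ht.2 + g.1 1 0 * hs.1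
  by_cases h00 : g.1 0 0 = 0
  · -- antidiagonal case
    have hdet := det_ne_zero g
    rw [h00] at hdet
    have h01 : g.1 0 1 ≠ 0 := fun h => hdet (by rw [h]; ring)
    have h10 : g.1 1 0 ≠ 0 := fun h => hdet (by rw [h]; ring)
    have ht00 : t 0 0 = s.1 1 1 := mul_right_cancel₀ h01 (by linear_combination E01)
    have ht11 : t 1 1 = s.1 0 0 := mul_right_cancel₀ h10 (by linear_combination E10)
    have h2 : (s.1 0 0 - s.1 1 1) * g.1 1 1 = 0 := by
      linear_combination E11 - g.1 1 1 * ht11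
    have h11 : g.1 1 1 = 0 := by
      rcases mul_eq_zero.mp h2 with h | h
      · exact absurd (sub_eq_zero.mp h) hne
      · exact h
    have hginv : (g⁻¹ : U2).1 0 0 = 0 ∧ (g⁻¹ : U2).1 1 1 = 0 := by
      rw [Matrix.UnitaryGroup.inv_val]
      constructor <;> simp [Matrix.star_apply, h00, h11]
    intro n
    rw [SetLike.mem_coe, SetLike.mem_coe, mem_Tsub_iff, mem_Tsub_iff]
    constructor
    · rintro ⟨hn1, hn2⟩
      have hv : (g * n * g⁻¹ : U2).1 = g.1 * n.1 * (g⁻¹ : U2).1 := by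
        rw [Matrix.UnitaryGroup.mul_val, Matrix.UnitaryGroup.mul_val]
      rw [hv]
      exact anti_conj _ _ _ h00 h11 hn1 hn2 hginv.1 hginv.2
    · rintro ⟨hn1, hn2⟩
      have hrw : n.1 = (g⁻¹ : U2).1 * (g * n * g⁻¹ : U2).1 * g.1 := by
        rw [← Matrix.UnitaryGroup.mul_val, ← Matrix.UnitaryGroup.mul_val]
        congr 1
        group
      rw [hrw]
      exact anti_conj _ _ _ hginv.1 hginv.2 hn1 hn2 h00 h11
  · -- diagonal case
    have ht00 : t 0 0 = s.1 0 0 := mul_right_cancel₀ h00 (by linear_combination E00)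
    have h2 : (s.1 0 0 - s.1 1 1) * g.1 0 1 = 0 := by
      linear_combination E01 - g.1 0 1 * ht00
    have h01 : g.1 0 1 = 0 := by
      rcases mul_eq_zero.mp h2 with h | h
      · exact absurd (sub_eq_zero.mp h) hne
      · exact h
    have hdet := det_ne_zero g
    rw [h01] at hdet
    have h11 : g.1 1 1 ≠ 0 := fun h => hdet (by rw [h]; ring)
    have ht11 : t 1 1 = s.1 1 1 := mul_right_cancel₀ h11 (by linear_combination E11)
    have h3 : (s.1 1 1 - s.1 0 0) * g.1 1 0 = 0 := by
      linear_combination E10 - g.1 1 0 * ht11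
    have h10 : g.1 1 0 = 0 := by
      rcases mul_eq_zero.mp h3 with h | h
      · exact absurd (sub_eq_zero.mp h).symm hne
      · exact h
    exact Subgroup.le_normalizer ((mem_Tsub_iff g).mpr ⟨h01, h10⟩)

/-- subgroups of the maximal torus `T ≤ U(2)` that are conjugate
by an element outside the normalizer `N` of `T` are central and equal; hence a
subgroup of `T` not contained in the center has the same normalizer in `U(2)`
as in `N`. -/
theorem conj_subgroups_of_torus (S S' : Subgroup U2) (hS : S ≤ Tsub) (hS' : S' ≤ Tsub) :
    (∀ g : U2, g ∉ Subgroup.normalizer (Tsub : Set U2) →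
        Subgroup.map (MulAut.conj g).toMonoidHom S = S' →
          S ≤ Subgroup.center U2 ∧ S' ≤ Subgroup.center U2 ∧ S = S') ∧
      (¬ S ≤ Subgroup.center U2 → Subgroup.normalizer (S : Set U2) = Subgroup.normalizer (S : Set U2) ⊓ Subgroup.normalizer (Tsub : Set U2)) := by
  constructor
  · intro g hg hmap
    have hScen : S ≤ Subgroup.center U2 := by
      intro s hsS
      have hsT := hS hsS
      by_cases heq : s.1 0 0 = s.1 1 1
      · exact central_of_diag_eq s hsT heq
      · exfalso
        have hconj : g * s * g⁻¹ ∈ S' := by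
          rw [← hmap]
          exact ⟨s, hsS, by simp [MulAut.conj_apply]⟩
        exact hg (key_lemma g s hsT heq (hS' hconj))
    have hc : ∀ x ∈ S, g * x * g⁻¹ = x := by
      intro x hx
      have h := Subgroup.mem_center_iff.mp (hScen hx) g⁻¹
      rw [mul_assoc, ← h, ← mul_assoc, mul_inv_cancel, one_mul]
    have hSS' : S = S' := by
      rw [← hmap]
      ext x
      simp only [Subgroup.mem_map, MulEquiv.coe_toMonoidHom, MulAut.conj_apply]
      constructor
      · intro hx
        exact ⟨x, hx, hc x hx⟩
      · rintro ⟨y, hy, rfl⟩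
        rwa [hc y hy]
    exact ⟨hScen, hSS' ▸ hScen, hSS'⟩
  · intro hnc
    refine le_antisymm (le_inf le_rfl ?_) inf_le_left
    intro g hg
    rw [SetLike.le_def] at hnc
    push_neg at hnc
    obtain ⟨s, hsS, hsc⟩ := hnc
    have hsT := hS hsS
    have hne : s.1 0 0 ≠ s.1 1 1 := fun h => hsc (central_of_diag_eq s hsT h)
    have hconj : g * s * g⁻¹ ∈ S := (Subgroup.mem_normalizer_iff.mp hg s).mp hsS
    exact key_lemma g s hsT hne (hS hconj)
end

section
/- Let W = C₂ = {1, w} and Λ = ℤW = ℤ ⊕ ℤw the group ring, with w acting by multiplication. A W-invariant rank-2 sublattice of ℤW is either of the form Λ₁(m,n) = ⟨m(1+w), n(1−w)⟩ for unique positive integers m, n, or of the form Λ₂(m,n) = Λ₁(m,n) + ℤ·((m+n)/2 + ((m−n)/2)w) where m, n are positive integers with m+n and m−n both even; in the latter case Λ₁(m,n) has index 2 in Λ₂(m,n). -/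
abbrev ZW : Type := ℤ × ℤ

def L1 (m n : ℤ) : AddSubgroup ZW := AddSubgroup.closure {(m, m), (n, -n)}

def L2 (m n : ℤ) : AddSubgroup ZW :=
  AddSubgroup.closure {(m, m), (n, -n), ((m + n) / 2, (m - n) / 2)}
lemma mem_L1 {m n : ℤ} {x : ZW} :
    x ∈ L1 m n ↔ 2*m ∣ x.1 + x.2 ∧ 2*n ∣ x.1 - x.2 := by
  rw [L1, AddSubgroup.mem_closure_pair]
  constructor
  · rintro ⟨a, b, rfl⟩
    exact ⟨⟨a, by simp; ring⟩, ⟨b, by simp; ring⟩⟩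
  · rintro ⟨⟨a, ha⟩, ⟨b, hb⟩⟩
    refine ⟨a, b, ?_⟩
    have hx : x = (x.1, x.2) := rfl
    rw [hx]
    simp only [Prod.smul_mk, smul_eq_mul, Prod.mk_add_mk, Prod.mk.injEq]
    constructor <;> linarith

lemma L2_eq (m n : ℤ) :
    L2 m n = L1 m n ⊔ AddSubgroup.zmultiples (((m + n) / 2, (m - n) / 2) : ZW) := by
  rw [L2, L1, AddSubgroup.zmultiples_eq_closure, ← AddSubgroup.closure_union]
  congr 1
  ext z; simp [Set.mem_insert_iff]; tauto

lemma mem_L2 {m n : ℤ} {x : ZW} :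
    x ∈ L2 m n ↔ ∃ c : ℤ, x - c • (((m + n) / 2, (m - n) / 2) : ZW) ∈ L1 m n := by
  rw [L2_eq, AddSubgroup.mem_sup]
  constructor
  · rintro ⟨y, hy, z, ⟨c, rfl⟩, rfl⟩
    exact ⟨c, by simpa using hy⟩
  · rintro ⟨c, hc⟩
    exact ⟨_, hc, _, ⟨c, rfl⟩, by abel⟩

lemma not_two_mul_dvd {m : ℤ} (hm : 0 < m) : ¬ (2*m ∣ m) := by
  rintro ⟨k, hk⟩
  have h1 : m * 1 = m * (2 * k) := by linear_combination hk
  have h2 := mul_left_cancel₀ hm.ne' h1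
  omega

lemma two_smul_mem_L1 {m n : ℤ} (h1 : Even (m+n)) (h2 : Even (m-n)) :
    (2:ℤ) • (((m + n) / 2, (m - n) / 2) : ZW) ∈ L1 m n := by
  obtain ⟨k, hk⟩ := h1; obtain ⟨l, hl⟩ := h2
  rw [mem_L1]
  constructor
  · exact ⟨1, by simp; omega⟩
  · exact ⟨1, by simp; omega⟩

lemma mem_L2_iff {m n : ℤ} (h1 : Even (m+n)) (h2 : Even (m-n)) {x : ZW} :
    x ∈ L2 m n ↔ x ∈ L1 m n ∨ x - (((m + n) / 2, (m - n) / 2) : ZW) ∈ L1 m n := by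
  set y : ZW := ((m + n) / 2, (m - n) / 2) with hy
  rw [mem_L2]
  constructor
  · rintro ⟨c, hc⟩
    have hmem : (x - c • y) + (c/2) • ((2:ℤ) • y) ∈ L1 m n :=
      add_mem hc (AddSubgroup.zsmul_mem _ (two_smul_mem_L1 h1 h2) _)
    have heq : (x - c • y) + (c/2) • ((2:ℤ) • y) = x - (c % 2) • y := by
      rw [smul_smul]
      have h3 : c % 2 = c - c / 2 * 2 := by omega
      rw [h3, sub_smul]
      abel
    rw [heq] at hmem
    rcases Int.emod_two_eq c with h | h <;> rw [h] at hmem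
    · left; simpa using hmem
    · right; simpa using hmem
  · rintro (h | h)
    · exact ⟨0, by simpa⟩
    · exact ⟨1, by simpa⟩

lemma diag_mem_L1 {m n a : ℤ} : ((a, a) : ZW) ∈ L1 m n ↔ m ∣ a := by
  rw [mem_L1]
  constructor
  · rintro ⟨⟨k, hk⟩, -⟩
    exact ⟨k, by simp only at hk; linarith⟩
  · rintro ⟨k, hk⟩
    exact ⟨⟨k, by simp only; linarith⟩, ⟨0, by simp⟩⟩

lemma antidiag_mem_L1 {m n a : ℤ} : ((a, -a) : ZW) ∈ L1 m n ↔ n ∣ a := by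
  rw [mem_L1]
  constructor
  · rintro ⟨-, ⟨k, hk⟩⟩
    exact ⟨k, by simp only at hk; linarith⟩
  · rintro ⟨k, hk⟩
    exact ⟨⟨0, by simp⟩, ⟨k, by simp only; linarith⟩⟩

lemma diag_mem_L2 {m n a : ℤ} (hm : 0 < m) (hn : 0 < n)
    (h1 : Even (m+n)) (h2 : Even (m-n)) : ((a, a) : ZW) ∈ L2 m n ↔ m ∣ a := by
  obtain ⟨k, hk⟩ := id h1; obtain ⟨l, hl⟩ := id h2
  rw [mem_L2_iff h1 h2]
  constructor
  · rintro (h | h)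
    · exact diag_mem_L1.mp h
    · exfalso
      rw [mem_L1] at h
      obtain ⟨-, ⟨t, ht⟩⟩ := h
      simp only [Prod.fst_sub, Prod.snd_sub] at ht
      have hlin : (a - (m+n)/2) - (a - (m-n)/2) = -n := by omega
      have hn' : -n = 2*n*t := hlin.symm.trans ht
      have h1' : n * (-1) = n * (2 * t) := by linear_combination hn'
      have := mul_left_cancel₀ hn.ne' h1'
      omega
  · intro h
    exact Or.inl (diag_mem_L1.mpr h)

lemma antidiag_mem_L2 {m n a : ℤ} (hm : 0 < m) (hn : 0 < n)
    (h1 : Even (m+n)) (h2 : Even (m-n)) : ((a, -a) : ZW) ∈ L2 m n ↔ n ∣ a := by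
  obtain ⟨k, hk⟩ := id h1; obtain ⟨l, hl⟩ := id h2
  rw [mem_L2_iff h1 h2]
  constructor
  · rintro (h | h)
    · exact antidiag_mem_L1.mp h
    · exfalso
      rw [mem_L1] at h
      obtain ⟨⟨t, ht⟩, -⟩ := h
      simp only [Prod.fst_sub, Prod.snd_sub] at ht
      have hlin : (a - (m+n)/2) + (-a - (m-n)/2) = -m := by omega
      have hm' : -m = 2*m*t := hlin.symm.trans ht
      have h1' : m * (-1) = m * (2 * t) := by linear_combination hm'
      have := mul_left_cancel₀ hm.ne' h1'
      omega
  · intro h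
    exact Or.inl (antidiag_mem_L1.mpr h)

lemma exists_pos_smul_mem (Λ : AddSubgroup ZW) (hfi : Λ.FiniteIndex) (x : ZW) :
    ∃ k : ℤ, 0 < k ∧ k • x ∈ Λ := by
  have hfin : Finite (ZW ⧸ Λ) := by
    have h := hfi.index_ne_zero
    by_contra hinf
    rw [not_finite_iff_infinite] at hinf
    exact h (AddSubgroup.index_eq_zero_iff_infinite.mpr hinf)
  set g : ZW ⧸ Λ := QuotientAddGroup.mk x with hg
  have hpos : 0 < addOrderOf g := addOrderOf_pos g
  refine ⟨(addOrderOf g : ℤ), by exact_mod_cast hpos, ?_⟩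
  rw [natCast_zsmul]
  have : ((addOrderOf g • x : ZW) : ZW ⧸ Λ) = 0 := by
    rw [QuotientAddGroup.mk_nsmul Λ x (addOrderOf g)]
    exact addOrderOf_nsmul_eq_zero g
  exact (QuotientAddGroup.eq_zero_iff _).mp this

lemma exists_gen (f : ℤ →+ ZW) (Λ : AddSubgroup ZW) (h : ∃ k : ℤ, 0 < k ∧ f k ∈ Λ) :
    ∃ m : ℤ, 0 < m ∧ ∀ a : ℤ, f a ∈ Λ ↔ m ∣ a := by
  obtain ⟨g, hg⟩ := Int.subgroup_cyclic (Λ.comap f)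
  have hmem : ∀ a : ℤ, f a ∈ Λ ↔ g ∣ a := by
    intro a
    rw [show (f a ∈ Λ) ↔ a ∈ Λ.comap f from Iff.rfl, hg, AddSubgroup.mem_closure_singleton]
    constructor
    · rintro ⟨k, rfl⟩; exact ⟨k, by rw [zsmul_eq_mul]; push_cast; ring⟩
    · rintro ⟨k, rfl⟩; exact ⟨k, by rw [zsmul_eq_mul]; push_cast; ring⟩
  obtain ⟨k, hk, hkmem⟩ := h
  have hg0 : g ≠ 0 := by
    rintro rfl
    have := (hmem k).mp hkmem
    rw [zero_dvd_iff] at this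
    omega
  exact ⟨|g|, abs_pos.mpr hg0, fun a => (hmem a).trans (abs_dvd g a).symm⟩

lemma exists_gen_diag (Λ : AddSubgroup ZW) (hfi : Λ.FiniteIndex) :
    ∃ m : ℤ, 0 < m ∧ ∀ a : ℤ, ((a, a) : ZW) ∈ Λ ↔ m ∣ a := by
  obtain ⟨m, hm, hmD⟩ := exists_gen ((AddMonoidHom.id ℤ).prod (AddMonoidHom.id ℤ)) Λ (by
    obtain ⟨k, hk, hkm⟩ := exists_pos_smul_mem Λ hfi (1, 1)
    refine ⟨k, hk, ?_⟩
    simpa [Prod.smul_mk] using hkm)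
  exact ⟨m, hm, fun a => by simpa using hmD a⟩

lemma exists_gen_antidiag (Λ : AddSubgroup ZW) (hfi : Λ.FiniteIndex) :
    ∃ n : ℤ, 0 < n ∧ ∀ a : ℤ, ((a, -a) : ZW) ∈ Λ ↔ n ∣ a := by
  obtain ⟨m, hm, hmD⟩ := exists_gen ((AddMonoidHom.id ℤ).prod (-(AddMonoidHom.id ℤ))) Λ (by
    obtain ⟨k, hk, hkm⟩ := exists_pos_smul_mem Λ hfi (1, -1)
    refine ⟨k, hk, ?_⟩
    simpa [Prod.smul_mk] using hkm)
  exact ⟨m, hm, fun a => by simpa using hmD a⟩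
/-- a `W`-invariant finite-index (rank 2) sublattice of `ℤW` is
either `Λ₁(m,n)` for unique positive `m, n`, or `Λ₂(m,n)` for unique positive
`m, n` with `m + n` and `m − n` even; and in the latter case `Λ₁(m,n)` has
index 2 in `Λ₂(m,n)`. -/
theorem invariant_lattice_classification :
    (∀ Λ : AddSubgroup ZW, Λ.FiniteIndex → (∀ x ∈ Λ, (x.2, x.1) ∈ Λ) →
      (∃! mn : ℤ × ℤ, 0 < mn.1 ∧ 0 < mn.2 ∧ Λ = L1 mn.1 mn.2) ∨
      (∃! mn : ℤ × ℤ, 0 < mn.1 ∧ 0 < mn.2 ∧ Even (mn.1 + mn.2) ∧ Even (mn.1 - mn.2) ∧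
        Λ = L2 mn.1 mn.2)) ∧
    (∀ m n : ℤ, 0 < m → 0 < n → Even (m + n) → Even (m - n) →
      L1 m n ≤ L2 m n ∧ (L1 m n).relIndex (L2 m n) = 2) := by
  constructor
  · intro Λ hfi hsw
    obtain ⟨m, hm, hmD⟩ := exists_gen_diag Λ hfi
    obtain ⟨n, hn, hnD⟩ := exists_gen_antidiag Λ hfi
    have hmm : ((m, m) : ZW) ∈ Λ := (hmD m).mpr dvd_rfl
    have hnn : ((n, -n) : ZW) ∈ Λ := (hnD n).mpr dvd_rfl
    have hL1le : L1 m n ≤ Λ := by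
      rw [L1, AddSubgroup.closure_le]
      rintro z hz
      simp only [Set.mem_insert_iff, Set.mem_singleton_iff] at hz
      rcases hz with rfl | rfl
      exacts [hmm, hnn]
    have hsum : ∀ x ∈ Λ, m ∣ x.1 + x.2 := by
      rintro ⟨x1, x2⟩ hx
      have h := Λ.add_mem hx (hsw _ hx)
      have h2 : ((x1 + x2, x1 + x2) : ZW) ∈ Λ := by
        convert h using 1
        simp [Prod.ext_iff]; try ring
      exact (hmD _).mp h2
    have hdiff : ∀ x ∈ Λ, n ∣ x.1 - x.2 := by
      rintro ⟨x1, x2⟩ hx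
      have h := Λ.sub_mem hx (hsw _ hx)
      have h2 : ((x1 - x2, -(x1 - x2)) : ZW) ∈ Λ := by
        convert h using 1
        simp [Prod.ext_iff]; try ring
      exact (hnD _).mp h2
    have hpar : ∀ x ∈ Λ, (2*m ∣ x.1 + x.2 ↔ 2*n ∣ x.1 - x.2) := by
      rintro ⟨x1, x2⟩ hx
      obtain ⟨u, hu⟩ := hsum _ hx
      obtain ⟨v, hv⟩ := hdiff _ hx
      simp only at hu hv ⊢
      constructor
      · intro hs
        rcases Int.even_or_odd v with ⟨w, hw⟩ | ⟨w, hw⟩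
        · exact ⟨w, by rw [hv, hw]; ring⟩
        · exfalso
          obtain ⟨a, ha⟩ := hs
          have hzΛ : ((x1 - a*m - w*n, x2 - a*m + w*n) : ZW) ∈ Λ := by
            have hmem := Λ.sub_mem (Λ.sub_mem hx (AddSubgroup.zsmul_mem Λ hmm a))
              (AddSubgroup.zsmul_mem Λ hnn w)
            convert hmem using 1
            simp [Prod.ext_iff, Prod.smul_mk]
          have hz2 : x2 - a*m + w*n = -(x1 - a*m - w*n) := by
            have : x1 + x2 = 2*m*a := ha
            linarith
          rw [hz2] at hzΛ
          have hdvd : n ∣ (x1 - a*m - w*n) := (hnD _).mp hzΛ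
          have hzn : 2*(x1 - a*m - w*n) = n := by
            rw [hw] at hv
            linarith [ha]
          obtain ⟨t, ht⟩ := hdvd
          have hcan : n * 1 = n * (2*t) := by linear_combination hzn.symm + 2*ht
          have := mul_left_cancel₀ hn.ne' hcan
          omega
      · intro hd
        rcases Int.even_or_odd u with ⟨w, hw⟩ | ⟨w, hw⟩
        · exact ⟨w, by rw [hu, hw]; ring⟩
        · exfalso
          obtain ⟨b, hb⟩ := hd
          have hzΛ : ((x1 - w*m - b*n, x2 - w*m + b*n) : ZW) ∈ Λ := by
            have hmem := Λ.sub_mem (Λ.sub_mem hx (AddSubgroup.zsmul_mem Λ hmm w))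
              (AddSubgroup.zsmul_mem Λ hnn b)
            convert hmem using 1
            simp [Prod.ext_iff, Prod.smul_mk]
          have hz2 : x2 - w*m + b*n = x1 - w*m - b*n := by
            have : x1 - x2 = 2*n*b := hb
            linarith
          rw [hz2] at hzΛ
          have hdvd : m ∣ (x1 - w*m - b*n) := by
            have := (hmD _).mp (show ((x1 - w*m - b*n, x1 - w*m - b*n) : ZW) ∈ Λ from hzΛ)
            omega
          have hzm : 2*(x1 - w*m - b*n) = m := by
            rw [hw] at hu
            linarith [hb]
          obtain ⟨t, ht⟩ := hdvd
          have hcan : m * 1 = m * (2*t) := by linear_combination hzm.symm + 2*ht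
          have := mul_left_cancel₀ hm.ne' hcan
          omega
    by_cases hcase : Λ ≤ L1 m n
    · left
      refine ⟨(m, n), ⟨hm, hn, le_antisymm hcase hL1le⟩, ?_⟩
      rintro ⟨m', n'⟩ ⟨hm', hn', heq⟩
      have hA : ((m', m') : ZW) ∈ Λ := by rw [heq]; exact diag_mem_L1.mpr dvd_rfl
      have hB : ((m, m) : ZW) ∈ L1 m' n' := by rw [← heq]; exact hmm
      have hC : ((n', -n') : ZW) ∈ Λ := by rw [heq]; exact antidiag_mem_L1.mpr dvd_rfl
      have hD : ((n, -n) : ZW) ∈ L1 m' n' := by rw [← heq]; exact hnn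
      have e1 : m' = m := Int.dvd_antisymm hm'.le hm.le (diag_mem_L1.mp hB) ((hmD m').mp hA)
      have e2 : n' = n := Int.dvd_antisymm hn'.le hn.le (antidiag_mem_L1.mp hD) ((hnD n').mp hC)
      simp [Prod.ext_iff, e1, e2]
    · right
      have hex : ∃ x, x ∈ Λ ∧ x ∉ L1 m n := by
        by_contra h
        push_neg at h
        exact hcase fun x hx => h x hx
      obtain ⟨⟨x1, x2⟩, hxΛ, hxL⟩ := hex
      obtain ⟨u, hu⟩ := hsum _ hxΛ
      obtain ⟨v, hv⟩ := hdiff _ hxΛ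
      simp only at hu hv
      rw [mem_L1] at hxL
      simp only [not_and] at hxL
      have hns : ¬ (2*m ∣ x1 + x2) := by
        intro hs
        exact hxL hs ((hpar _ hxΛ).mp hs)
      obtain ⟨w, hw⟩ : ∃ w, u = 2*w + 1 := by
        rcases Int.even_or_odd u with ⟨w, hw⟩ | ⟨w, hw⟩
        · exact absurd ⟨w, by rw [hu, hw]; ring⟩ hns
        · exact ⟨w, hw⟩
      have hnd : ¬ (2*n ∣ x1 - x2) := fun hd => hns ((hpar _ hxΛ).mpr hd)
      obtain ⟨r, hr⟩ : ∃ r, v = 2*r + 1 := by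
        rcases Int.even_or_odd v with ⟨r, hr⟩ | ⟨r, hr⟩
        · exact absurd ⟨r, by rw [hv, hr]; ring⟩ hnd
        · exact ⟨r, hr⟩
      have hzΛ : ((x1 - w*m - r*n, x2 - w*m + r*n) : ZW) ∈ Λ := by
        have hmem := Λ.sub_mem (Λ.sub_mem hxΛ (AddSubgroup.zsmul_mem Λ hmm w))
          (AddSubgroup.zsmul_mem Λ hnn r)
        convert hmem using 1
        simp [Prod.ext_iff, Prod.smul_mk]
      have hz1 : (x1 - w*m - r*n) + (x2 - w*m + r*n) = m := by
        rw [hw] at hu; linarith only [hu]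
      have hz2 : (x1 - w*m - r*n) - (x2 - w*m + r*n) = n := by
        rw [hr] at hv; linarith only [hv]
      have hmn1 : Even (m + n) := ⟨x1 - w*m - r*n, by linarith only [hz1, hz2]⟩
      have hmn2 : Even (m - n) := ⟨x2 - w*m + r*n, by linarith only [hz1, hz2]⟩
      have hyΛ : (((m+n)/2, (m-n)/2) : ZW) ∈ Λ := by
        have e : (((m+n)/2, (m-n)/2) : ZW) = (x1 - w*m - r*n, x2 - w*m + r*n) := by
          rw [Prod.ext_iff]
          constructor <;> simp only <;> omega
        rw [e]; exact hzΛ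
      have hΛeq : Λ = L2 m n := by
        apply le_antisymm
        · rintro ⟨y1, y2⟩ hy
          rw [mem_L2_iff hmn1 hmn2]
          by_cases hs' : 2*m ∣ y1 + y2
          · left
            rw [mem_L1]
            exact ⟨hs', (hpar _ hy).mp hs'⟩
          · right
            have hd' : ¬ (2*n ∣ y1 - y2) := fun h => hs' ((hpar _ hy).mpr h)
            obtain ⟨u', hu'⟩ := hsum _ hy
            obtain ⟨v', hv'⟩ := hdiff _ hy
            simp only at hu' hv'
            obtain ⟨w', hw'⟩ : ∃ w', u' = 2*w' + 1 := by
              rcases Int.even_or_odd u' with ⟨t, ht⟩ | ⟨t, ht⟩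
              · exact absurd ⟨t, by rw [hu', ht]; ring⟩ hs'
              · exact ⟨t, ht⟩
            obtain ⟨r', hr'⟩ : ∃ r', v' = 2*r' + 1 := by
              rcases Int.even_or_odd v' with ⟨t, ht⟩ | ⟨t, ht⟩
              · exact absurd ⟨t, by rw [hv', ht]; ring⟩ hd'
              · exact ⟨t, ht⟩
            rw [mem_L1]
            simp only [Prod.fst_sub, Prod.snd_sub]
            constructor
            · refine ⟨w', ?_⟩
              have hme : (m+n)/2 + (m-n)/2 = m := by
                obtain ⟨k, hk⟩ := hmn1; obtain ⟨l, hl⟩ := hmn2; omega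
              rw [hw'] at hu'
              linarith only [hu', hme]
            · refine ⟨r', ?_⟩
              have hne : (m+n)/2 - (m-n)/2 = n := by
                obtain ⟨k, hk⟩ := hmn1; obtain ⟨l, hl⟩ := hmn2; omega
              rw [hr'] at hv'
              linarith only [hv', hne]
        · rw [L2, AddSubgroup.closure_le]
          rintro z hz
          simp only [Set.mem_insert_iff, Set.mem_singleton_iff] at hz
          rcases hz with rfl | rfl | rfl
          exacts [hmm, hnn, hyΛ]
      refine ⟨(m, n), ⟨hm, hn, hmn1, hmn2, hΛeq⟩, ?_⟩
      rintro ⟨m', n'⟩ ⟨hm', hn', he1, he2, heq⟩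
      have hA : ((m', m') : ZW) ∈ Λ := by
        rw [heq]; exact (diag_mem_L2 hm' hn' he1 he2).mpr dvd_rfl
      have hB : ((m, m) : ZW) ∈ L2 m' n' := by rw [← heq]; exact hmm
      have hC : ((n', -n') : ZW) ∈ Λ := by
        rw [heq]; exact (antidiag_mem_L2 hm' hn' he1 he2).mpr dvd_rfl
      have hD : ((n, -n) : ZW) ∈ L2 m' n' := by rw [← heq]; exact hnn
      have e1 : m' = m := Int.dvd_antisymm hm'.le hm.le
        ((diag_mem_L2 hm' hn' he1 he2).mp hB) ((hmD m').mp hA)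
      have e2 : n' = n := Int.dvd_antisymm hn'.le hn.le
        ((antidiag_mem_L2 hm' hn' he1 he2).mp hD) ((hnD n').mp hC)
      simp [Prod.ext_iff, e1, e2]
  · intro m n hm hn h1 h2
    have hle : L1 m n ≤ L2 m n := by
      rw [L1, L2]
      apply AddSubgroup.closure_mono
      intro z hz
      simp only [Set.mem_insert_iff, Set.mem_singleton_iff] at hz ⊢
      tauto
    refine ⟨hle, ?_⟩
    show ((L1 m n).addSubgroupOf (L2 m n)).index = 2
    rw [AddSubgroup.index_eq_two_iff]
    have hyL2 : (((m+n)/2, (m-n)/2) : ZW) ∈ L2 m n := by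
      rw [L2]
      exact AddSubgroup.subset_closure (by simp)
    have hyne : (((m+n)/2, (m-n)/2) : ZW) ∉ L1 m n := by
      rw [mem_L1]
      rintro ⟨⟨t, ht⟩, -⟩
      simp only at ht
      have hme : (m+n)/2 + (m-n)/2 = m := by
        obtain ⟨k, hk⟩ := h1; obtain ⟨l, hl⟩ := h2; omega
      have hcan : m * 1 = m * (2*t) := by linear_combination hme.symm + ht
      have := mul_left_cancel₀ hm.ne' hcan
      omega
    refine ⟨⟨((m+n)/2, (m-n)/2), hyL2⟩, ?_⟩
    intro b
    rw [AddSubgroup.mem_addSubgroupOf, AddSubgroup.mem_addSubgroupOf]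
    have hbL2 := b.2
    rw [mem_L2_iff h1 h2] at hbL2
    rcases hbL2 with hb | hb
    · right
      refine ⟨hb, ?_⟩
      intro hby
      apply hyne
      have hsub := AddSubgroup.sub_mem _ hby hb
      simpa using hsub
    · left
      constructor
      · have h2yL1 := two_smul_mem_L1 h1 h2
        have hadd := AddSubgroup.add_mem _ hb h2yL1
        convert hadd using 1
        push_cast
        rw [two_smul]
        abel
      · intro hbL1
        apply hyne
        have hsub := AddSubgroup.sub_mem _ hbL1 hb
        simpa using hsub
end
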